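/- Let a_1,...,a_m be integers, b_1,...,b_m nonnegative integers, and n a positive integer. Then ∑_{k=0}^{n-1} (-1)^{mk} · ∏_{i=1}^m C(a_i - 1, b_i + k) ≡ 0 modulo gcd(a_1,...,a_m, b_1,...,b_m, n), where for negative upper argument the binomial coefficient C(a-1, b+k) is interpreted via the polynomial extension (a-1)(a-2)···(a-b-k)/(b+k)!. -/

import Mathlib

open Finset fwdDiff

local notation "Δ" => fwdDiff (1 : ℕ)

lemma choose_shift (x y : ℤ) (j D : ℕ) (h : ((j.factorial * D : ℕ) : ℤ) ∣ x - y) :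
    (D : ℤ) ∣ Ring.choose x j - Ring.choose y j := by
  have key : (j.factorial : ℤ) * (Ring.choose x j - Ring.choose y j)
      = (descPochhammer ℤ j).eval x - (descPochhammer ℤ j).eval y := by
    rw [Polynomial.eval_eq_smeval, Polynomial.eval_eq_smeval,
      Ring.descPochhammer_eq_factorial_smul_choose x j,
      Ring.descPochhammer_eq_factorial_smul_choose y j, nsmul_eq_mul, nsmul_eq_mul]
    ring
  have h2 : ((j.factorial : ℤ) * (D : ℤ)) ∣ (j.factorial : ℤ) * (Ring.choose x j - Ring.choose y j) := by
    rw [key]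
    exact_mod_cast dvd_trans h (Polynomial.sub_dvd_eval_sub x y _)
  exact (mul_dvd_mul_iff_left (by exact_mod_cast Nat.factorial_ne_zero j : (j.factorial:ℤ) ≠ 0)).mp h2

lemma iter_zero_fun (s : ℕ) : Δ^[s] (fun _ : ℕ => (0:ℤ)) = fun _ => 0 := by
  induction s with
  | zero => rfl
  | succ s ih => rw [Function.iterate_succ_apply, fwdDiff_const, ih]

lemma diff_choose (c A : ℕ) : ∀ (s : ℕ) (x : ℕ),
    Δ^[s] (fun r => (((c + r).choose A : ℕ) : ℤ)) x
      = if s ≤ A then (((c + x).choose (A - s) : ℕ) : ℤ) else 0 := by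
  induction A with
  | zero =>
    intro s x
    cases s with
    | zero => simp
    | succ s =>
      have h0 : (fun r => (((c + r).choose 0 : ℕ) : ℤ)) = fun _ => (1:ℤ) := by
        funext r; simp
      rw [h0]
      have : Δ (fun _ : ℕ => (1:ℤ)) = fun _ => 0 := fwdDiff_const (1:ℕ) (1:ℤ)
      rw [Function.iterate_succ_apply, this, iter_zero_fun]
      simp
  | succ A ih =>
    intro s x
    cases s with
    | zero => simp
    | succ s =>
      have hΔ : Δ (fun r => (((c + r).choose (A+1) : ℕ) : ℤ))
          = fun r => (((c + r).choose A : ℕ) : ℤ) := by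
        funext r
        show (((c + (r+1)).choose (A+1) : ℕ) : ℤ) - ((c + r).choose (A+1) : ℕ) = _
        rw [show c + (r+1) = (c + r) + 1 by ring, Nat.choose_succ_succ]
        push_cast; ring
      rw [Function.iterate_succ_apply, hΔ, ih s x]
      simp [Nat.succ_le_succ_iff, Nat.succ_sub_succ]

lemma iter_shift : ∀ (w : ℕ) (f : ℕ → ℤ) (x : ℕ), Δ^[w] (fun r => f (r+1)) x = Δ^[w] f (x+1) := by
  intro w
  induction w with
  | zero => intro f x; rfl
  | succ w ih =>
    intro f x
    rw [Function.iterate_succ_apply, Function.iterate_succ_apply]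
    have h : Δ (fun r => f (r+1)) = fun r => (Δ f) (r+1) := rfl
    rw [h, ih (Δ f) x]

lemma iter_step (f : ℕ → ℤ) (w x : ℕ) : Δ^[w] f (x+1) = Δ^[w+1] f x + Δ^[w] f x := by
  rw [Function.iterate_succ_apply']
  show _ = (Δ^[w] f (x + 1) - Δ^[w] f x) + Δ^[w] f x
  ring

lemma leibniz (f g : ℕ → ℤ) : ∀ (j x : ℕ),
    Δ^[j] (fun r => f r * g r) x
      = ∑ w ∈ range (j+1), (j.choose w : ℤ) * (Δ^[w] f x) * (Δ^[j-w] g (x + w)) := by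
  intro j
  induction j generalizing f g with
  | zero => intro x; simp
  | succ j ih =>
    intro x
    have hsplit : Δ (fun r => f r * g r)
        = fun r => (f (r+1)) * (Δ g r) + (Δ f r) * (g r) := by
      funext r
      show f (r+1) * g (r+1) - f r * g r = f (r+1) * (g (r+1) - g r) + (f (r+1) - f r) * g r
      ring
    rw [Function.iterate_succ_apply, hsplit]
    have hadd : Δ^[j] (fun r => (f (r+1)) * (Δ g r) + (Δ f r) * (g r)) x
        = Δ^[j] (fun r => (f (r+1)) * (Δ g r)) x + Δ^[j] (fun r => (Δ f r) * (g r)) x := by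
      have h1 : (fun r => (f (r+1)) * (Δ g r) + (Δ f r) * (g r))
          = (fun r => (f (r+1)) * (Δ g r)) + (fun r => (Δ f r) * (g r)) := rfl
      rw [h1, fwdDiff_iter_add]
      rfl
    rw [hadd, ih (fun r => f (r+1)) (Δ g) x, ih (Δ f) g x]
    have hS1 : ∑ w ∈ range (j+1), (j.choose w : ℤ) * (Δ^[w] (fun r => f (r+1)) x) * (Δ^[j-w] (Δ g) (x + w))
        = (∑ w ∈ range (j+1), (j.choose w : ℤ) * (Δ^[w+1] f x) * (Δ^[j-w+1] g (x + w)))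
          + ∑ w ∈ range (j+1), (j.choose w : ℤ) * (Δ^[w] f x) * (Δ^[j-w+1] g (x + w)) := by
      rw [← Finset.sum_add_distrib]
      apply Finset.sum_congr rfl
      intro w _
      rw [iter_shift, iter_step, ← Function.iterate_succ_apply]
      ring
    have hS2 : ∑ w ∈ range (j+1), (j.choose w : ℤ) * (Δ^[w] (Δ f) x) * (Δ^[j-w] g (x + w))
        = ∑ w ∈ range (j+1), (j.choose w : ℤ) * (Δ^[w+1] f x) * (Δ^[j-w] g (x + w)) := by
      apply Finset.sum_congr rfl
      intro w _
      rw [← Function.iterate_succ_apply]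
    rw [hS1, hS2]
    have htarget : ∑ w ∈ range (j+1+1), ((j+1).choose w : ℤ) * (Δ^[w] f x) * (Δ^[j+1-w] g (x + w))
        = (∑ v ∈ range (j+1), ((j+1).choose (v+1) : ℤ) * (Δ^[v+1] f x) * (Δ^[j-v] g (x + v + 1)))
          + (Δ^[0] f x) * (Δ^[j+1] g x) := by
      rw [Finset.sum_range_succ' (fun w => ((j+1).choose w : ℤ) * (Δ^[w] f x) * (Δ^[j+1-w] g (x + w))) (j+1)]
      simp only [Nat.choose_zero_right, Nat.cast_one, one_mul, add_zero, Nat.succ_sub_succ,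
        Nat.sub_zero]
      rfl
    rw [htarget]
    have hexpand : ∑ v ∈ range (j+1), ((j+1).choose (v+1) : ℤ) * (Δ^[v+1] f x) * (Δ^[j-v] g (x + v + 1))
        = (∑ v ∈ range (j+1), (j.choose v : ℤ) * (Δ^[v+1] f x) * (Δ^[j-v] g (x + v + 1)))
          + ∑ v ∈ range (j+1), (j.choose (v+1) : ℤ) * (Δ^[v+1] f x) * (Δ^[j-v] g (x + v + 1)) := by
      rw [← Finset.sum_add_distrib]
      apply Finset.sum_congr rfl
      intro v _
      rw [Nat.choose_succ_succ]
      push_cast; ring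
    rw [hexpand]
    have hT2 : ∑ v ∈ range (j+1), (j.choose v : ℤ) * (Δ^[v+1] f x) * (Δ^[j-v] g (x + v + 1))
        = (∑ v ∈ range (j+1), (j.choose v : ℤ) * (Δ^[v+1] f x) * (Δ^[j-v] g (x + v)))
          + ∑ v ∈ range (j+1), (j.choose v : ℤ) * (Δ^[v+1] f x) * (Δ^[j-v+1] g (x + v)) := by
      rw [← Finset.sum_add_distrib]
      apply Finset.sum_congr rfl
      intro v _
      rw [show x + v + 1 = (x + v) + 1 by ring, iter_step g (j-v) (x+v)]
      ring
    have hU : ∑ w ∈ range (j+1), (j.choose w : ℤ) * (Δ^[w] f x) * (Δ^[j-w+1] g (x + w))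
        = (∑ v ∈ range (j+1), (j.choose (v+1) : ℤ) * (Δ^[v+1] f x) * (Δ^[j-v] g (x + v + 1)))
          + (Δ^[0] f x) * (Δ^[j+1] g x) := by
      rw [Finset.sum_range_succ' (fun w => (j.choose w : ℤ) * (Δ^[w] f x) * (Δ^[j-w+1] g (x + w))) j]
      rw [Finset.sum_range_succ (fun v => (j.choose (v+1) : ℤ) * (Δ^[v+1] f x) * (Δ^[j-v] g (x + v + 1))) j]
      simp only [Nat.choose_succ_self, Nat.cast_zero, zero_mul, add_zero, Nat.choose_zero_right,
        Nat.cast_one, one_mul, Nat.sub_zero]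
      congr 1
      apply Finset.sum_congr rfl
      intro v hv
      have hv' : v < j := Finset.mem_range.mp hv
      have he : j - (v+1) + 1 = j - v := by omega
      rw [he, show x + (v+1) = x + v + 1 by ring]
    rw [hU, hT2]
    ring

lemma newton_sum (P : ℕ → ℤ) (R : ℕ) :
    ∑ r ∈ range R, P r = ∑ j ∈ range R, (R.choose (j+1) : ℤ) * (Δ^[j] P 0) := by
  induction R with
  | zero => simp
  | succ R ih =>
    rw [Finset.sum_range_succ, ih]
    have hnewt := shift_eq_sum_fwdDiff_iter (1 : ℕ) P R 0
    simp only [smul_eq_mul, zero_add, Nat.smul_one_eq_cast] at hnewt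
    have hPR : P R = ∑ j ∈ range (R+1), (R.choose j : ℤ) * (Δ^[j] P 0) := by
      simpa using hnewt
    have hsplit : ∑ j ∈ range (R+1), ((R+1).choose (j+1) : ℤ) * (Δ^[j] P 0)
        = ∑ j ∈ range (R+1), (R.choose (j+1) : ℤ) * (Δ^[j] P 0)
          + ∑ j ∈ range (R+1), (R.choose j : ℤ) * (Δ^[j] P 0) := by
      rw [← Finset.sum_add_distrib]
      apply Finset.sum_congr rfl
      intro j _
      rw [Nat.choose_succ_succ]
      push_cast; ring
    rw [hsplit, Finset.sum_range_succ (fun j => (R.choose (j+1) : ℤ) * (Δ^[j] P 0)) R]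
    simp only [Nat.choose_succ_self, Nat.cast_zero, zero_mul, add_zero]
    rw [hPR]

lemma pfree_cancel {p a w' ν : ℕ} (pp : p.Prime) (hw' : ¬ p ∣ w') (h : p ^ a ∣ w' * ν) :
    p ^ a ∣ ν :=
  (Nat.Coprime.pow_left a ((Nat.Prime.coprime_iff_not_dvd pp).mpr hw')).dvd_of_dvd_mul_left h

lemma mul_choose_id (N t : ℕ) (hN : 1 ≤ N) (ht : 1 ≤ t) :
    t * N.choose t = N * (N-1).choose (t-1) := by
  obtain ⟨n, rfl⟩ : ∃ n, N = n + 1 := ⟨N - 1, by omega⟩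
  obtain ⟨k, rfl⟩ : ∃ k, t = k + 1 := ⟨t - 1, by omega⟩
  simp only [Nat.add_sub_cancel]
  rw [mul_comm (k+1) _, ← Nat.add_one_mul_choose_eq]

lemma lemmaX (d c A j w t ν : ℕ) (hw : 1 ≤ w) (hwj : w ≤ j)
    (hteq : t + j = A + w) (hdc : d ∣ c) (hdA : d ∣ A) (hdwv : d ∣ w * ν) :
    d ∣ j * (j.choose w) * ((c + w).choose t) * ν := by
  rw [Nat.dvd_iff_prime_pow_dvd_dvd]
  intro p k pp hpkd
  rcases Nat.eq_zero_or_pos ν with rfl | hν0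
  · simp
  rcases Nat.eq_zero_or_pos k with rfl | hk0
  · simp
  have hj0 : j ≠ 0 := by omega
  have hw0 : w ≠ 0 := by omega
  set e := j.factorization p with he_def
  set x := w.factorization p with hx_def
  have hpej : p ^ e ∣ j := Nat.ordProj_dvd j p
  by_cases hke : k ≤ e
  · exact dvd_trans (dvd_trans (pow_dvd_pow p hke) hpej)
      ⟨(j.choose w) * ((c + w).choose t) * ν, by ring⟩
  push_neg at hke
  have pp' : Nat.Prime p := pp
  have hpe1j : ¬ p ^ (e+1) ∣ j := Nat.pow_succ_factorization_not_dvd hj0 pp'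
  have hpkwv : p ^ k ∣ w * ν := hpkd.trans hdwv
  have hν : p ^ (k - min k x) ∣ ν := by
    rcases le_or_gt k x with h | h
    · simp [Nat.min_eq_left h]
    · have hminx : min k x = x := Nat.min_eq_right h.le
      rw [hminx]
      have hsplit : p ^ k = p ^ x * p ^ (k - x) := by
        rw [← pow_add]; congr 1; omega
      have hw_eq : w = p ^ x * (w / p ^ x) := (Nat.ordProj_mul_ordCompl_eq_self w p).symm
      have h2 : p ^ x * p ^ (k - x) ∣ p ^ x * ((w / p ^ x) * ν) := by
        rw [← hsplit, ← mul_assoc, ← hw_eq]; exact hpkwv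
      have h3 : p ^ (k - x) ∣ (w / p ^ x) * ν :=
        (Nat.mul_dvd_mul_iff_left (Nat.pow_pos pp'.pos)).mp h2
      exact pfree_cancel pp' (Nat.not_dvd_ordCompl pp' hw0) h3
  by_cases hxe : x ≤ e
  · have hminx : min k x = x := Nat.min_eq_right (by omega)
    rw [hminx] at hν
    have hpxj : p ^ x ∣ j := dvd_trans (pow_dvd_pow p hxe) hpej
    have hjv : p ^ k ∣ j * ν := by
      have h4 : p ^ x * p ^ (k - x) ∣ j * ν := Nat.mul_dvd_mul hpxj hν
      rwa [← pow_add, show x + (k - x) = k by omega] at h4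
    exact dvd_trans hjv ⟨(j.choose w) * ((c + w).choose t), by ring⟩
  push_neg at hxe
  set x' := min k x with hx'_def
  have hex' : e < x' := by omega
  have hpxw : p ^ x ∣ w := Nat.ordProj_dvd w p
  have hpx'w : p ^ x' ∣ w := dvd_trans (pow_dvd_pow p (min_le_right k x)) hpxw
  have hpe1A : p ^ (e+1) ∣ A := dvd_trans (pow_dvd_pow p (by omega)) (hpkd.trans hdA)
  have hpe1w : p ^ (e+1) ∣ w := dvd_trans (pow_dvd_pow p (by omega : e+1 ≤ x)) hpxw
  have ht0 : t ≠ 0 := by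
    intro h
    apply hpe1j
    have : j = A + w := by omega
    rw [this]
    exact Nat.dvd_add hpe1A hpe1w
  -- p^e ∣ t and ¬ p^(e+1) ∣ t
  have hjAw : j ≤ A + w := by omega
  have hpet : p ^ e ∣ t := by
    have h1 : p ^ e ∣ A + w := Nat.dvd_add (dvd_trans (pow_dvd_pow p (by omega)) (hpkd.trans hdA))
      (dvd_trans (pow_dvd_pow p (by omega : e ≤ x)) hpxw)
    have h2 : t = (A + w) - j := by omega
    rw [h2]
    exact Nat.dvd_sub h1 hpej
  have hpe1t : ¬ p ^ (e+1) ∣ t := by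
    intro h
    apply hpe1j
    have h2 : j = (A + w) - t := by omega
    rw [h2]
    exact Nat.dvd_sub (Nat.dvd_add hpe1A hpe1w) h
  -- factorization of t is e
  have hft : t.factorization p = e := by
    have h1 : e ≤ t.factorization p := (Nat.Prime.pow_dvd_iff_le_factorization pp' ht0).mp hpet
    have h2 : ¬ (e + 1 ≤ t.factorization p) := fun h =>
      hpe1t ((Nat.Prime.pow_dvd_iff_le_factorization pp' ht0).mpr h)
    omega
  -- p^(x'-e) ∣ C := (c+w).choose t
  have hCw : p ^ (x' - e) ∣ (c + w).choose t := by
    have hcw1 : 1 ≤ c + w := by omega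
    have hid := mul_choose_id (c + w) t hcw1 (by omega)
    have hpx'cw : p ^ x' ∣ c + w :=
      Nat.dvd_add (dvd_trans (pow_dvd_pow p (min_le_left k x)) (hpkd.trans hdc)) hpx'w
    have h5 : p ^ x' ∣ t * ((c + w).choose t) := by
      rw [hid]; exact Dvd.dvd.mul_right hpx'cw _
    -- t = p^e * t₁ with ¬ p ∣ t₁
    have ht_eq : t = p ^ e * (t / p ^ e) := by
      conv_lhs => rw [← Nat.ordProj_mul_ordCompl_eq_self t p]
      rw [hft]
    have h6 : p ^ e * p ^ (x' - e) ∣ p ^ e * ((t / p ^ e) * ((c + w).choose t)) := by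
      rw [← pow_add, show e + (x' - e) = x' by omega, ← mul_assoc, ← ht_eq]
      exact h5
    have h7 : p ^ (x' - e) ∣ (t / p ^ e) * ((c + w).choose t) :=
      (Nat.mul_dvd_mul_iff_left (Nat.pow_pos pp'.pos)).mp h6
    have hnd : ¬ p ∣ t / p ^ e := by
      have := Nat.not_dvd_ordCompl pp' ht0
      rwa [← hft]
    exact pfree_cancel pp' hnd h7
  -- combine
  have hcomb : p ^ k ∣ j * ((c + w).choose t) * ν := by
    have h8 : p ^ e * p ^ (x' - e) * p ^ (k - x') ∣ j * ((c + w).choose t) * ν :=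
      Nat.mul_dvd_mul (Nat.mul_dvd_mul hpej hCw) hν
    rwa [← pow_add, ← pow_add, show e + (x' - e) + (k - x') = k by omega] at h8
  exact dvd_trans hcomb ⟨j.choose w, by ring⟩

lemma lemmaW0 (d c A j : ℕ) (hjA : j ≤ A) (hdc : d ∣ c) (hdA : d ∣ A) :
    (d:ℤ) ∣ (j:ℤ) * ((c.choose (A - j) : ℕ) : ℤ) := by
  set t := A - j with ht
  have htj : t + j = A := by omega
  rcases Nat.eq_zero_or_pos t with h0 | hpos
  · -- j = A
    have : j = A := by omega
    subst this
    exact Dvd.dvd.mul_right (by exact_mod_cast Int.natCast_dvd_natCast.mpr hdA) _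
  rcases Nat.eq_zero_or_pos c with rfl | hc0
  · rw [Nat.choose_eq_zero_of_lt (by omega)]
    simp
  have hid : (t:ℤ) * (c.choose t : ℕ) = (c:ℤ) * ((c-1).choose (t-1) : ℕ) := by
    exact_mod_cast congrArg (Nat.cast : ℕ → ℤ) (mul_choose_id c t hc0 hpos)
  have hkey : (j:ℤ) * (c.choose t : ℕ)
      = (A:ℤ) * (c.choose t : ℕ) - (c:ℤ) * ((c-1).choose (t-1) : ℕ) := by
    rw [← hid]
    have : (j:ℤ) = (A:ℤ) - (t:ℤ) := by
      have := htj; push_cast [← this]; ring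
    rw [this]; ring
  rw [hkey]
  exact dvd_sub (Dvd.dvd.mul_right (Int.natCast_dvd_natCast.mpr hdA) _)
    (Dvd.dvd.mul_right (Int.natCast_dvd_natCast.mpr hdc) _)

lemma natAbs_dvd_trick (d : ℕ) (z : ℤ) : (d:ℤ) ∣ z ↔ d ∣ z.natAbs := by
  rw [← Int.natAbs_dvd_natAbs, Int.natAbs_natCast]

lemma core_claim (d : ℕ) : ∀ (m : ℕ) (c A : Fin m → ℕ), (∀ i, d ∣ c i) → (∀ i, d ∣ A i) →
    ∀ j : ℕ, 1 ≤ j →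
    (d:ℤ) ∣ (j:ℤ) * (Δ^[j] (fun r => ∏ i, (((c i + r).choose (A i) : ℕ) : ℤ)) 0) := by
  intro m
  induction m with
  | zero =>
    intro c A hc hA j hj
    have h1 : (fun r : ℕ => ∏ i : Fin 0, (((c i + r).choose (A i) : ℕ) : ℤ)) = fun _ => 1 := by
      funext r; simp
    rw [h1]
    obtain ⟨s, rfl⟩ : ∃ s, j = s + 1 := ⟨j - 1, by omega⟩
    rw [Function.iterate_succ_apply]
    have h2 : Δ (fun _ : ℕ => (1:ℤ)) = fun _ => 0 := fwdDiff_const (1:ℕ) (1:ℤ)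
    rw [h2, iter_zero_fun]
    simp
  | succ m ih =>
    intro c A hc hA j hj
    set F := fun r : ℕ => ∏ i : Fin m, (((c i.castSucc + r).choose (A i.castSucc) : ℕ) : ℤ) with hF
    set G := fun r : ℕ => (((c (Fin.last m) + r).choose (A (Fin.last m)) : ℕ) : ℤ) with hG
    have hprod : (fun r : ℕ => ∏ i : Fin (m+1), (((c i + r).choose (A i) : ℕ) : ℤ))
        = fun r => F r * G r := by
      funext r
      rw [Fin.prod_univ_castSucc]
    rw [hprod, leibniz F G j 0, Finset.mul_sum]
    apply Finset.dvd_sum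
    intro w hw
    rw [diff_choose]
    set cl := c (Fin.last m) with hcl
    set Al := A (Fin.last m) with hAl
    by_cases hcase : j - w ≤ Al
    · rw [if_pos hcase]
      rcases Nat.eq_zero_or_pos w with rfl | hwpos
      · -- w = 0 case
        simp only [Nat.choose_zero_right, Nat.cast_one, one_mul, Function.iterate_zero, id_eq,
          Nat.sub_zero, zero_add]
        have h3 := lemmaW0 d cl Al j (by omega) (hc _) (hA _)
        have : (j:ℤ) * (F 0 * ((cl + 0).choose (Al - j) : ℕ))
            = ((j:ℤ) * ((cl.choose (Al - j) : ℕ) : ℤ)) * F 0 := by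
          rw [show cl + 0 = cl by ring]; ring
        rw [this]
        exact Dvd.dvd.mul_right h3 _
      · -- w ≥ 1
        have hwj : w ≤ j := by
          have := Finset.mem_range.mp hw; omega
        set N := Δ^[w] F 0 with hN
        have hIH : (d:ℤ) ∣ (w:ℤ) * N := ih (fun i => c i.castSucc) (fun i => A i.castSucc)
          (fun i => hc _) (fun i => hA _) w hwpos
        have hIH' : d ∣ w * N.natAbs := by
          have := (natAbs_dvd_trick d ((w:ℤ) * N)).mp hIH
          rwa [Int.natAbs_mul, Int.natAbs_natCast] at this
        set t := Al - (j - w) with htdef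
        have hteq : t + j = Al + w := by omega
        have hnat := lemmaX d cl Al j w t N.natAbs hwpos hwj hteq (hc _) (hA _) hIH'
        rw [natAbs_dvd_trick]
        have habs : ((j:ℤ) * ((j.choose w : ℕ) * N * (((cl + w).choose t : ℕ) : ℤ))).natAbs
            = j * (j.choose w) * ((cl + w).choose t) * N.natAbs := by
          rw [Int.natAbs_mul, Int.natAbs_mul, Int.natAbs_mul, Int.natAbs_natCast,
            Int.natAbs_natCast, Int.natAbs_natCast]
          ring
        rw [show (0:ℕ) + w = w by ring, habs]
        exact hnat
    · rw [if_neg hcase]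
      simp

lemma core_nat (d m : ℕ) (hd : 1 ≤ d) (c A : Fin m → ℕ)
    (hc : ∀ i, d ∣ c i) (hA : ∀ i, d ∣ A i) :
    (d:ℤ) ∣ ∑ r ∈ range d, ∏ i, (((c i + r).choose (A i) : ℕ) : ℤ) := by
  set P := fun r : ℕ => ∏ i, (((c i + r).choose (A i) : ℕ) : ℤ) with hP
  rw [newton_sum P d]
  apply Finset.dvd_sum
  intro j hj
  rcases Nat.eq_zero_or_pos j with rfl | hjpos
  · rw [show (0:ℕ)+1 = 1 from rfl, Nat.choose_one_right]
    exact dvd_mul_right (d:ℤ) _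
  -- j ≥ 1
  set N := Δ^[j] P 0 with hN
  have hjN : (d:ℤ) ∣ (j:ℤ) * N := core_claim d m c A hc hA j hjpos
  set ν := N.natAbs with hν
  have hjν : d ∣ j * ν := by
    have := (natAbs_dvd_trick d ((j:ℤ) * N)).mp hjN
    rwa [Int.natAbs_mul, Int.natAbs_natCast] at this
  set g1 := Nat.gcd d (j+1) with hg1
  set g2 := Nat.gcd d j with hg2
  have hg1pos : 0 < g1 := Nat.gcd_pos_of_pos_left _ hd
  have hg2pos : 0 < g2 := Nat.gcd_pos_of_pos_left _ hd
  have hd2ν : d / g2 ∣ ν := by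
    have hcop : Nat.Coprime (d / g2) (j / g2) := Nat.coprime_div_gcd_div_gcd hg2pos
    have e1 : g2 * (d / g2) = d := Nat.mul_div_cancel' (Nat.gcd_dvd_left d j)
    have e2 : g2 * (j / g2) = j := Nat.mul_div_cancel' (Nat.gcd_dvd_right d j)
    have h1 : g2 * (d / g2) ∣ g2 * ((j / g2) * ν) := by
      rw [e1, ← mul_assoc, e2]; exact hjν
    exact hcop.dvd_of_dvd_mul_left ((Nat.mul_dvd_mul_iff_left hg2pos).mp h1)
  have hd1C : d / g1 ∣ d.choose (j+1) := by
    have hid : (j+1) * d.choose (j+1) = d * (d-1).choose j := by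
      have := mul_choose_id d (j+1) hd (by omega)
      simpa using this
    have hcop : Nat.Coprime (d / g1) ((j+1) / g1) := Nat.coprime_div_gcd_div_gcd hg1pos
    have h1 : ((j+1)/g1) * d.choose (j+1) = (d/g1) * (d-1).choose j := by
      have h2 : g1 * (((j+1)/g1) * d.choose (j+1)) = g1 * ((d/g1) * (d-1).choose j) := by
        rw [← mul_assoc, ← mul_assoc, Nat.mul_div_cancel' (Nat.gcd_dvd_right d (j+1)),
          Nat.mul_div_cancel' (Nat.gcd_dvd_left d (j+1))]
        exact hid
      exact Nat.eq_of_mul_eq_mul_left hg1pos h2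
    exact hcop.dvd_of_dvd_mul_left ⟨(d-1).choose j, h1⟩
  have hcopg : Nat.Coprime g1 g2 := by
    have hstep : Nat.Coprime (j+1) g2 :=
      Nat.Coprime.coprime_dvd_right (Nat.gcd_dvd_right d j) (show Nat.Coprime (j+1) j by rw [Nat.add_comm]; exact Nat.coprime_add_self_left.mpr (Nat.coprime_one_left j))
    exact Nat.Coprime.coprime_dvd_left (Nat.gcd_dvd_right d (j+1)) hstep
  have hg12 : g1 * g2 ∣ d :=
    hcopg.mul_dvd_of_dvd_of_dvd (Nat.gcd_dvd_left d (j+1)) (Nat.gcd_dvd_left d j)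
  obtain ⟨s, hs⟩ := hg12
  have e1 : d / g1 = g2 * s := by
    rw [show d = g1 * (g2 * s) by rw [hs]; ring, Nat.mul_div_cancel_left _ hg1pos]
  have e2 : d / g2 = g1 * s := by
    rw [show d = g2 * (g1 * s) by rw [hs]; ring, Nat.mul_div_cancel_left _ hg2pos]
  have hdd : d ∣ (d / g1) * (d / g2) := by
    refine ⟨s, ?_⟩
    rw [e1, e2, hs]; ring
  have hfinal : d ∣ d.choose (j+1) * ν :=
    dvd_trans hdd (mul_dvd_mul hd1C hd2ν)
  rw [natAbs_dvd_trick]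
  rwa [Int.natAbs_mul, Int.natAbs_natCast]

lemma blocks (d m n : ℕ) (hd : 1 ≤ d) (hdn : d ∣ n) (c A : Fin m → ℕ)
    (hc : ∀ i, d ∣ c i) (hA : ∀ i, d ∣ A i) :
    (d:ℤ) ∣ ∑ k ∈ range n, ∏ i, (((c i + k).choose (A i) : ℕ) : ℤ) := by
  obtain ⟨e, rfl⟩ := hdn
  induction e with
  | zero => simp
  | succ e ih =>
    rw [show d * (e+1) = d * e + d by ring, Finset.sum_range_add]
    apply dvd_add ih
    have heq : ∑ k ∈ range d, ∏ i, (((c i + (d * e + k)).choose (A i) : ℕ) : ℤ)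
        = ∑ k ∈ range d, ∏ i, ((((c i + d * e) + k).choose (A i) : ℕ) : ℤ) := by
      apply Finset.sum_congr rfl
      intro k _
      apply Finset.prod_congr rfl
      intro i _
      rw [show c i + (d * e + k) = c i + d * e + k by ring]
    rw [heq]
    exact core_nat d m hd (fun i => c i + d * e) A
      (fun i => dvd_add (hc i) (Dvd.dvd.mul_right dvd_rfl e)) hA



lemma ring_choose_negSucc (N j : ℕ) :
    Ring.choose (Int.negSucc N) j = (-1)^j * ((N + j).choose j : ℤ) := by
  cases j with
  | zero => simp [Ring.choose_zero_right]
  | succ s =>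
    show Ring.multichoose (Int.negSucc N - (s+1) + 1) (s+1) = _
    rw [← Ring.multichoose_eq_multichoose]
    have h : Int.negSucc N - (s+1) + 1 = Int.negSucc (N + s) := by
      simp [Int.negSucc_eq]; ring
    rw [h]
    show Int.multichoose _ _ = _
    simp [Int.multichoose]
    rfl

theorem stmt18 (m : ℕ) (a : Fin m → ℤ) (b : Fin m → ℕ) (n : ℕ) (hn : 0 < n) :
    (↑(Nat.gcd (Finset.univ.gcd fun i => (a i).natAbs)
        (Nat.gcd (Finset.univ.gcd b) n)) : ℤ) ∣
      ∑ k ∈ Finset.range n, (-1 : ℤ) ^ (m * k) * ∏ i, Ring.choose (a i - 1) (b i + k) := by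
  set X := Finset.univ.gcd fun i => (a i).natAbs with hX
  set Y := Finset.univ.gcd b with hY
  set d := Nat.gcd X (Nat.gcd Y n) with hd_def
  have hdn : d ∣ n := dvd_trans (Nat.gcd_dvd_right X (Nat.gcd Y n)) (Nat.gcd_dvd_right Y n)
  have hd1 : 1 ≤ d := by
    rcases Nat.eq_zero_or_pos d with h | h
    · rw [h] at hdn; omega
    · exact h
  have hdb : ∀ i, d ∣ b i := fun i =>
    dvd_trans (dvd_trans (Nat.gcd_dvd_right X (Nat.gcd Y n)) (Nat.gcd_dvd_left Y n))
      (Finset.gcd_dvd (Finset.mem_univ i))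
  have hda : ∀ i, (d:ℤ) ∣ a i := fun i =>
    Int.dvd_natAbs.mp (Int.natCast_dvd_natCast.mpr
      (dvd_trans (Nat.gcd_dvd_left X (Nat.gcd Y n)) (Finset.gcd_dvd (Finset.mem_univ i))))
  set B := ∑ i, b i with hB
  set J := B + n with hJ
  set Mz : ℤ := ((d * J.factorial : ℕ) : ℤ) with hM
  have hM1 : (1:ℤ) ≤ Mz := by
    rw [hM]
    exact_mod_cast Nat.one_le_iff_ne_zero.mpr (Nat.mul_ne_zero (by omega) (Nat.factorial_ne_zero J))
  set a' : Fin m → ℤ := fun i => a i - ((a i).natAbs : ℤ) * Mz with ha'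
  have ha'np : ∀ i, a' i ≤ 0 := by
    intro i
    have h1 : a i ≤ ((a i).natAbs : ℤ) := Int.le_natAbs
    have h2 : ((a i).natAbs : ℤ) * 1 ≤ ((a i).natAbs : ℤ) * Mz :=
      mul_le_mul_of_nonneg_left hM1 (by positivity)
    simp only [ha']
    omega
  set A : Fin m → ℕ := fun i => (-(a' i)).toNat with hA
  have ha'A : ∀ i, a' i = -(A i : ℤ) := by
    intro i
    simp only [hA]
    rw [Int.toNat_of_nonneg (by linarith [ha'np i])]
    ring
  have hdA : ∀ i, d ∣ A i := by
    intro i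
    have h1 : (d:ℤ) ∣ a' i := by
      simp only [ha', hM]
      apply dvd_sub (hda i)
      exact Dvd.dvd.mul_left ⟨(J.factorial : ℤ), by push_cast; ring⟩ _
    rw [ha'A i] at h1
    exact Int.natCast_dvd_natCast.mp (dvd_neg.mp h1)
  set c : Fin m → ℕ := fun i => A i + b i with hc
  have hdc : ∀ i, d ∣ c i := fun i => dvd_add (hdA i) (hdb i)
  -- factor congruence in ZMod d
  have hfac : ∀ (i : Fin m) (k : ℕ), k < n →
      ((Ring.choose (a i - 1) (b i + k) : ℤ) : ZMod d)
        = (-1 : ZMod d)^(b i + k) * (((c i + k).choose (A i) : ℕ) : ZMod d) := by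
    intro i k hk
    set j := b i + k with hj
    have hjJ : j ≤ J := by
      have hbB : b i ≤ B := Finset.single_le_sum (fun _ _ => Nat.zero_le _) (Finset.mem_univ i)
      omega
    have hshift : (d:ℤ) ∣ Ring.choose (a i - 1) j - Ring.choose (a' i - 1) j := by
      apply choose_shift
      have heq : (a i - 1) - (a' i - 1) = ((a i).natAbs : ℤ) * Mz := by
        simp only [ha']; ring
      rw [heq, hM]
      obtain ⟨q, hq⟩ := Nat.factorial_dvd_factorial hjJ
      refine ⟨((a i).natAbs : ℤ) * (q : ℤ), ?_⟩
      rw [hq]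
      push_cast
      ring
    have hval : Ring.choose (a' i - 1) j = (-1:ℤ)^j * (((c i + k).choose (A i) : ℕ) : ℤ) := by
      have h1 : a' i - 1 = Int.negSucc (A i) := by
        rw [ha'A i, Int.negSucc_eq]
        ring
      rw [h1, ring_choose_negSucc]
      congr 1
      have h2 : A i + j = c i + k := by simp only [hc, hj]; ring
      norm_cast
      rw [← h2]
      exact Nat.choose_symm_add.symm
    have hcast : ((Ring.choose (a i - 1) j : ℤ) : ZMod d) = ((Ring.choose (a' i - 1) j : ℤ) : ZMod d) := by
      have := (ZMod.intCast_zmod_eq_zero_iff_dvd _ d).mpr hshift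
      rwa [Int.cast_sub, sub_eq_zero] at this
    rw [hcast, hval]
    push_cast
    ring
  rw [← ZMod.intCast_zmod_eq_zero_iff_dvd]
  rw [Int.cast_sum]
  have hterm : ∀ k ∈ range n,
      (((-1 : ℤ) ^ (m * k) * ∏ i, Ring.choose (a i - 1) (b i + k) : ℤ) : ZMod d)
        = (-1 : ZMod d)^B * (((∏ i, (((c i + k).choose (A i) : ℕ) : ℤ) : ℤ)) : ZMod d) := by
    intro k hk
    rw [Int.cast_mul, Int.cast_pow, Int.cast_prod]
    have hprod : ∏ i, ((Ring.choose (a i - 1) (b i + k) : ℤ) : ZMod d)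
        = ∏ i, ((-1 : ZMod d)^(b i + k) * (((c i + k).choose (A i) : ℕ) : ZMod d)) :=
      Finset.prod_congr rfl (fun i _ => hfac i k (Finset.mem_range.mp hk))
    rw [hprod, Finset.prod_mul_distrib, Finset.prod_pow_eq_pow_sum]
    have hsum : ∑ i : Fin m, (b i + k) = B + m * k := by
      rw [Finset.sum_add_distrib, Finset.sum_const, Finset.card_univ, Fintype.card_fin,
        smul_eq_mul]
    have hsq : ((-1 : ZMod d)^(m*k)) * ((-1 : ZMod d)^(m*k)) = 1 := by
      rw [← pow_add, ← two_mul, pow_mul]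
      norm_num
    rw [hsum, pow_add]
    push_cast
    calc ((-1:ZMod d))^(m*k) * ((-1:ZMod d)^B * (-1:ZMod d)^(m*k) * ∏ i, (((c i + k).choose (A i) : ℕ) : ZMod d))
        = (((-1:ZMod d))^(m*k) * ((-1:ZMod d))^(m*k)) * ((-1:ZMod d)^B * ∏ i, (((c i + k).choose (A i) : ℕ) : ZMod d)) := by ring
      _ = (-1:ZMod d)^B * ∏ i, (((c i + k).choose (A i) : ℕ) : ZMod d) := by rw [hsq]; ring
  rw [Finset.sum_congr rfl hterm, ← Finset.mul_sum, ← Int.cast_sum,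
    (ZMod.intCast_zmod_eq_zero_iff_dvd _ d).mpr (blocks d m n hd1 hdn c A hdc hdA), mul_zero]
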